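/- For the diagonal octagon with all sides equal to n, the entropy bound holds asymptotically in the sense: (3/2)·ln 3 − 2·ln 2 = lim_{n→∞} (1/(3n²))·ln PP(n,n,n), where PP(n,n,n) = ∏_{i,j,k=1}^{n} (i+j+k−1)/(i+j+k−2). -/

import Mathlib

open Finset Filter Real

noncomputable def ℓh (m : ℕ) : ℝ := Real.log m
noncomputable def Fh (m : ℕ) : ℝ := Real.log (Nat.factorial m)
noncomputable def GFh (m : ℕ) : ℝ := ∑ a ∈ Finset.range m, Fh a

lemma tele (f : ℕ → ℝ) (c n : ℕ) :
    ∑ i ∈ Finset.range n, (f (c + i + 1) - f (c + i)) = f (c + n) - f c := by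
  simpa [add_assoc] using Finset.sum_range_sub (fun i => f (c + i)) n

lemma Fh_step (m : ℕ) : Fh (m + 1) - Fh m = ℓh (m + 1) := by
  have h1 : (0:ℝ) < (Nat.factorial m : ℝ) := by exact_mod_cast Nat.factorial_pos m
  have h2 : (0:ℝ) < ((m:ℝ) + 1) := by positivity
  rw [Fh, Fh, ℓh, Nat.factorial_succ]
  push_cast
  rw [Real.log_mul (by positivity) (ne_of_gt h1)]
  push_cast
  ring

lemma sum_l_tel (c n : ℕ) : ∑ j ∈ Finset.range n, ℓh (c + j + 1) = Fh (c + n) - Fh c := by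
  rw [← tele Fh c n]
  exact Finset.sum_congr rfl fun j _ => (Fh_step (c + j)).symm

lemma sum_F_tel (c n : ℕ) : ∑ i ∈ Finset.range n, Fh (c + i) = GFh (c + n) - GFh c := by
  rw [← tele GFh c n]
  exact Finset.sum_congr rfl fun i _ => by
    rw [GFh, GFh, Finset.sum_range_succ]; ring

lemma triple_sum (n : ℕ) :
    ∑ i ∈ Finset.range n, ∑ j ∈ Finset.range n, ∑ k ∈ Finset.range n,
      (ℓh (i+j+k+2) - ℓh (i+j+k+1))
    = GFh (3*n) - 3 * GFh (2*n) + 3 * GFh n := by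
  have h1 : ∀ i j : ℕ, ∑ k ∈ Finset.range n, (ℓh (i+j+k+2) - ℓh (i+j+k+1))
      = ℓh (i+j+n+1) - ℓh (i+j+1) := fun i j => tele (fun t => ℓh (t+1)) (i+j) n
  calc ∑ i ∈ Finset.range n, ∑ j ∈ Finset.range n, ∑ k ∈ Finset.range n,
      (ℓh (i+j+k+2) - ℓh (i+j+k+1))
      = ∑ i ∈ Finset.range n, ∑ j ∈ Finset.range n, (ℓh (i+j+n+1) - ℓh (i+j+1)) :=
        Finset.sum_congr rfl fun i _ => Finset.sum_congr rfl fun j _ => h1 i j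
    _ = ∑ i ∈ Finset.range n, ((Fh (2*n+i) - Fh (n+i)) - (Fh (n+i) - Fh (0+i))) := by
        refine Finset.sum_congr rfl fun i _ => ?_
        rw [Finset.sum_sub_distrib]
        have ha : ∑ j ∈ Finset.range n, ℓh (i+j+n+1) = Fh ((i+n)+n) - Fh (i+n) := by
          rw [← sum_l_tel (i+n) n]
          exact Finset.sum_congr rfl fun j _ => by rw [show i+j+n+1 = (i+n)+j+1 by omega]
        have hb : ∑ j ∈ Finset.range n, ℓh (i+j+1) = Fh (i+n) - Fh i := sum_l_tel i n
        rw [ha, hb, show (i+n)+n = 2*n+i by omega, show i+n = n+i by omega, show (0+i) = i by omega]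
    _ = (∑ i ∈ Finset.range n, Fh (2*n+i)) - 2*(∑ i ∈ Finset.range n, Fh (n+i))
          + ∑ i ∈ Finset.range n, Fh (0+i) := by
        simp only [Finset.sum_sub_distrib]; ring
    _ = (GFh (2*n+n) - GFh (2*n)) - 2*(GFh (n+n) - GFh n) + (GFh (0+n) - GFh 0) := by
        rw [sum_F_tel, sum_F_tel, sum_F_tel]
    _ = GFh (3*n) - 3 * GFh (2*n) + 3 * GFh n := by
        rw [show 2*n+n = 3*n by omega, show n+n = 2*n by omega, show 0+n = n by omega]
        simp [GFh]; ring

lemma log_prod_eq (n : ℕ) :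
    Real.log (∏ i ∈ Finset.Icc 1 n, ∏ j ∈ Finset.Icc 1 n, ∏ k ∈ Finset.Icc 1 n,
      ((i : ℝ) + (j : ℝ) + (k : ℝ) - 1) / ((i : ℝ) + (j : ℝ) + (k : ℝ) - 2))
    = GFh (3*n) - 3 * GFh (2*n) + 3 * GFh n := by
  have hre : (∏ i ∈ Finset.Icc 1 n, ∏ j ∈ Finset.Icc 1 n, ∏ k ∈ Finset.Icc 1 n,
      ((i : ℝ) + (j : ℝ) + (k : ℝ) - 1) / ((i : ℝ) + (j : ℝ) + (k : ℝ) - 2))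
      = ∏ i ∈ Finset.range n, ∏ j ∈ Finset.range n, ∏ k ∈ Finset.range n,
        (((i+j+k+2 : ℕ) : ℝ) / ((i+j+k+1 : ℕ) : ℝ)) := by
    rw [← Finset.Ico_add_one_right_eq_Icc, Finset.prod_Ico_eq_prod_range]
    refine Finset.prod_congr (by simp) fun i _ => ?_
    rw [Finset.prod_Ico_eq_prod_range]
    refine Finset.prod_congr (by simp) fun j _ => ?_
    rw [Finset.prod_Ico_eq_prod_range]
    refine Finset.prod_congr (by simp) fun k _ => ?_
    congr 1 <;> push_cast <;> ring
  rw [hre, ← triple_sum n]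
  rw [Real.log_prod (fun i _ => ?_)]
  · refine Finset.sum_congr rfl fun i _ => ?_
    rw [Real.log_prod (fun j _ => ?_)]
    · refine Finset.sum_congr rfl fun j _ => ?_
      rw [Real.log_prod (fun k _ => ?_)]
      · refine Finset.sum_congr rfl fun k _ => ?_
        rw [Real.log_div (by positivity) (by positivity), ℓh, ℓh]
      · positivity
    · positivity
  · positivity

noncomputable def Ah (m : ℕ) : ℝ := ∑ a ∈ Finset.range m, (a:ℝ) * ℓh a
noncomputable def Eh (m : ℕ) : ℝ := Fh m - ((m:ℝ) * ℓh m - (m:ℝ))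
noncomputable def Ch (m : ℕ) : ℝ := ∑ a ∈ Finset.range m, Eh a

lemma sum_id (m : ℕ) : ∑ a ∈ Finset.range m, (a:ℝ) = (m:ℝ)*((m:ℝ)-1)/2 := by
  induction m with
  | zero => simp
  | succ k ih => rw [Finset.sum_range_succ, ih]; push_cast; ring

lemma GF_split (m : ℕ) : GFh m = Ah m - (m:ℝ)*((m:ℝ)-1)/2 + Ch m := by
  rw [GFh, Ah, Ch, ← sum_id m]
  rw [← Finset.sum_sub_distrib, ← Finset.sum_add_distrib]
  refine Finset.sum_congr rfl fun a _ => ?_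
  rw [Eh]; ring

lemma Fh_eq_sum (m : ℕ) : Fh m = ∑ i ∈ Finset.range m, ℓh (i+1) := by
  induction m with
  | zero => simp [Fh]
  | succ k ih => rw [Finset.sum_range_succ, ← ih, ← Fh_step k]; ring

lemma integral_xlogx {b : ℝ} (hb : 1 ≤ b) :
    ∫ x in (1:ℝ)..b, x * Real.log x = b^2/2 * Real.log b - b^2/4 + 1/4 := by
  have h : ∀ x ∈ Set.uIcc (1:ℝ) b, HasDerivAt (fun x : ℝ => x^2/2 * Real.log x - x^2/4)
      (x * Real.log x) x := by
    intro x hx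
    rw [Set.uIcc_of_le hb] at hx
    have hx0 : x ≠ 0 := by intro h; rw [h] at hx; linarith [hx.1]
    have h1 : HasDerivAt (fun x : ℝ => x^2/2) x x := by
      have := (hasDerivAt_pow 2 x).div_const 2
      simpa using this.congr_deriv (by push_cast; ring)
    have h3 : HasDerivAt (fun x : ℝ => x^2/4) (x/2) x := by
      have := (hasDerivAt_pow 2 x).div_const 4
      simpa using this.congr_deriv (by push_cast; ring)
    have h2 := (h1.mul (Real.hasDerivAt_log hx0)).sub h3
    refine h2.congr_deriv ?_
    field_simp
    ring
  rw [intervalIntegral.integral_eq_sub_of_hasDerivAt h ?_]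
  · simp [Real.log_one]
  · apply ContinuousOn.intervalIntegrable
    apply ContinuousOn.mul continuousOn_id
    apply Real.continuousOn_log.mono
    intro x hx
    rw [Set.uIcc_of_le hb] at hx
    simp only [Set.mem_compl_iff, Set.mem_singleton_iff]
    intro h; rw [h] at hx; linarith [hx.1]

lemma Ah_bound (m : ℕ) (hm : 1 ≤ m) :
    |Ah m - ((m:ℝ)^2/2 * ℓh m - (m:ℝ)^2/4)| ≤ (m:ℝ) * ℓh m + 1 := by
  obtain ⟨k, rfl⟩ : ∃ k, m = k + 1 := ⟨m - 1, by omega⟩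
  set f : ℝ → ℝ := fun x => x * Real.log x with hf
  have hcast : ((1:ℝ) + (k:ℕ)) = ((k+1 : ℕ) : ℝ) := by push_cast; ring
  have h1b : (1:ℝ) ≤ ((k+1:ℕ):ℝ) := by exact_mod_cast Nat.one_le_iff_ne_zero.mpr (by omega)
  have hmono : MonotoneOn f (Set.Icc (1:ℝ) (1 + (k:ℕ))) := by
    intro x hx y hy hxy
    have h1 : Real.log x ≤ Real.log y := Real.log_le_log (by linarith [hx.1]) hxy
    have h2 : 0 ≤ Real.log x := Real.log_nonneg hx.1
    have h3 : 0 ≤ Real.log y := Real.log_nonneg (hx.1.trans hxy)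
    simp only [hf]
    nlinarith [hx.1]
  have hint : ∫ x in (1:ℝ)..(1 + (k:ℕ)), f x
      = ((k+1:ℕ):ℝ)^2/2 * ℓh (k+1) - ((k+1:ℕ):ℝ)^2/4 + 1/4 := by
    rw [hcast]
    exact integral_xlogx h1b
  have hup : Ah (k+1) ≤ ∫ x in (1:ℝ)..(1 + (k:ℕ)), f x := by
    refine le_trans (le_of_eq ?_) hmono.sum_le_integral
    rw [Ah, Finset.sum_range_succ']
    simp only [Nat.cast_zero, zero_mul, add_zero]
    refine Finset.sum_congr rfl fun i _ => ?_
    simp only [hf, ℓh]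
    push_cast
    rw [add_comm (1:ℝ) (i:ℝ)]
  have hlow : (∫ x in (1:ℝ)..(1 + (k:ℕ)), f x) ≤ Ah (k+1) + ((k+1:ℕ):ℝ) * ℓh (k+1) := by
    refine le_trans hmono.integral_le_sum (le_of_eq ?_)
    have e1 : Ah (k+2) = Ah (k+1) + ((k+1:ℕ):ℝ) * ℓh (k+1) := by
      rw [Ah, Ah]; exact Finset.sum_range_succ _ _
    rw [← e1, Ah, Finset.sum_range_succ', Finset.sum_range_succ']
    norm_num [ℓh]
    refine Finset.sum_congr rfl fun i _ => ?_
    simp only [hf]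
    push_cast
    ring_nf
  have hl0 : 0 ≤ ((k+1:ℕ):ℝ) * ℓh (k+1) := by
    have : 0 ≤ ℓh (k+1) := Real.log_nonneg h1b
    positivity
  rw [abs_le]
  constructor <;> [linarith [hlow, hint ▸ hup]; linarith [hint ▸ hlow, hup]]

lemma Eh_bounds (m : ℕ) (hm : 1 ≤ m) : 1 ≤ Eh m ∧ Eh m ≤ 1 + ℓh m := by
  obtain ⟨k, rfl⟩ : ∃ k, m = k + 1 := ⟨m - 1, by omega⟩
  have hcast : ((1:ℝ) + (k:ℕ)) = ((k+1 : ℕ) : ℝ) := by push_cast; ring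
  have h1b : (1:ℝ) ≤ ((k+1:ℕ):ℝ) := by exact_mod_cast Nat.one_le_iff_ne_zero.mpr (by omega)
  have hmono : MonotoneOn Real.log (Set.Icc (1:ℝ) (1 + (k:ℕ))) := by
    intro x hx y _ hxy
    exact Real.log_le_log (by linarith [hx.1]) hxy
  have hint : ∫ x in (1:ℝ)..(1 + (k:ℕ)), Real.log x
      = ((k+1:ℕ):ℝ) * ℓh (k+1) - ((k+1:ℕ):ℝ) + 1 := by
    rw [hcast, integral_log]
    simp [ℓh, Real.log_one]
  have hFsum : Fh (k+1) = ∑ i ∈ Finset.range k, ℓh (i+2) := by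
    rw [Fh_eq_sum, Finset.sum_range_succ']
    norm_num [ℓh]
    refine Finset.sum_congr rfl fun i _ => ?_
    congr 1
    ring
  have hlow : (∫ x in (1:ℝ)..(1 + (k:ℕ)), Real.log x) ≤ Fh (k+1) := by
    refine le_trans hmono.integral_le_sum (le_of_eq ?_)
    rw [hFsum]
    refine Finset.sum_congr rfl fun i _ => ?_
    simp only [ℓh]
    congr 1
    push_cast
    ring
  have hup : Fh (k+1) - ℓh (k+1) ≤ ∫ x in (1:ℝ)..(1 + (k:ℕ)), Real.log x := by
    have he : Fh (k+1) - ℓh (k+1) = ∑ i ∈ Finset.range k, Real.log ((1:ℝ) + (i:ℕ)) := by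
      have h1 : Fh (k+1) = Fh k + ℓh (k+1) := by rw [← Fh_step k]; ring
      have h2 : ∑ i ∈ Finset.range k, ℓh (i+1)
          = ∑ i ∈ Finset.range k, Real.log ((1:ℝ)+(i:ℕ)) := by
        refine Finset.sum_congr rfl fun i _ => ?_
        simp only [ℓh]; push_cast; ring_nf
      rw [h1, Fh_eq_sum, h2]; ring
    rw [he]; exact hmono.sum_le_integral
  have h1 := hint ▸ hlow
  have h2 := hint ▸ hup
  constructor <;> simp only [Eh] <;> linarith

lemma Ch_bound (m : ℕ) : |Ch m| ≤ (m:ℝ) * (1 + ℓh m) := by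
  have hterm : ∀ a ∈ Finset.range m, 0 ≤ Eh a ∧ Eh a ≤ 1 + ℓh m := by
    intro a ha
    have ham : a < m := Finset.mem_range.mp ha
    have hm1 : 1 ≤ m := by omega
    have hlm : 0 ≤ ℓh m := Real.log_nonneg (by exact_mod_cast hm1)
    rcases Nat.eq_zero_or_pos a with h0 | h1
    · subst h0
      have hE0 : Eh 0 = 0 := by simp [Eh, Fh, ℓh]
      rw [hE0]
      exact ⟨le_refl 0, by linarith⟩
    · obtain ⟨e1, e2⟩ := Eh_bounds a h1
      have hle : ℓh a ≤ ℓh m := by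
        simp only [ℓh]
        exact Real.log_le_log (by exact_mod_cast h1) (by exact_mod_cast ham.le)
      exact ⟨by linarith, by linarith⟩
  have h1 : |Ch m| = Ch m := abs_of_nonneg (Finset.sum_nonneg fun a ha => (hterm a ha).1)
  rw [h1, Ch]
  calc ∑ a ∈ Finset.range m, Eh a ≤ ∑ _a ∈ Finset.range m, (1 + ℓh m) :=
        Finset.sum_le_sum fun a ha => (hterm a ha).2
    _ = (m:ℝ) * (1 + ℓh m) := by
        rw [Finset.sum_const, Finset.card_range, nsmul_eq_mul]

lemma eps_bound (n m : ℕ) (hn : 1 ≤ n) (hm : 1 ≤ m) (hle : m ≤ 3*n) :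
    |Ah m - ((m:ℝ)^2/2 * ℓh m - (m:ℝ)^2/4)| ≤ 3*(n:ℝ)*(Real.log 3 + Real.log n) + 1 := by
  refine (Ah_bound m hm).trans ?_
  have hn0 : (0:ℝ) < n := by exact_mod_cast hn
  have h2 : (m:ℝ) ≤ 3*n := by exact_mod_cast hle
  have h1 : ℓh m ≤ Real.log 3 + Real.log n := by
    rw [ℓh, ← Real.log_mul (by norm_num) (ne_of_gt hn0)]
    exact Real.log_le_log (by exact_mod_cast hm) h2
  have h0 : 0 ≤ ℓh m := Real.log_nonneg (by exact_mod_cast hm)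
  have := mul_le_mul h2 h1 h0 (by positivity)
  linarith

lemma Ch_bound' (n m : ℕ) (hn : 1 ≤ n) (hm : 1 ≤ m) (hle : m ≤ 3*n) :
    |Ch m| ≤ 3*(n:ℝ)*(1 + Real.log 3 + Real.log n) := by
  refine (Ch_bound m).trans ?_
  have hn0 : (0:ℝ) < n := by exact_mod_cast hn
  have h2 : (m:ℝ) ≤ 3*n := by exact_mod_cast hle
  have h1 : ℓh m ≤ Real.log 3 + Real.log n := by
    rw [ℓh, ← Real.log_mul (by norm_num) (ne_of_gt hn0)]
    exact Real.log_le_log (by exact_mod_cast hm) h2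
  have h0 : 0 ≤ ℓh m := Real.log_nonneg (by exact_mod_cast hm)
  have := mul_le_mul h2 (by linarith : 1 + ℓh m ≤ 1 + Real.log 3 + Real.log n)
    (by linarith) (by positivity)
  linarith

lemma main_tendsto :
    Filter.Tendsto (fun n : ℕ => (1 / (3 * (n : ℝ) ^ 2)) * (GFh (3*n) - 3*GFh (2*n) + 3*GFh n))
      Filter.atTop (nhds ((3 / 2) * Real.log 3 - 2 * Real.log 2)) := by
  set c : ℝ := (3/2) * Real.log 3 - 2 * Real.log 2 with hc
  set f : ℕ → ℝ := fun n => (1 / (3 * (n : ℝ) ^ 2)) * (GFh (3*n) - 3*GFh (2*n) + 3*GFh n) with hfdef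
  set b : ℕ → ℝ := fun n => (14*Real.log 3 + 28/3) * (1/(n:ℝ)) + 14 * (Real.log n / n) with hb
  have hlog : Filter.Tendsto (fun n : ℕ => Real.log n / n) Filter.atTop (nhds 0) := by
    have h1 : Filter.Tendsto (fun x : ℝ => Real.log x / x) Filter.atTop (nhds 0) :=
      Real.isLittleO_log_id_atTop.tendsto_div_nhds_zero
    exact h1.comp tendsto_natCast_atTop_atTop
  have hinv : Filter.Tendsto (fun n : ℕ => 1 / (n:ℝ)) Filter.atTop (nhds 0) :=
    tendsto_one_div_atTop_nhds_zero_nat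
  have hb0 : Filter.Tendsto b Filter.atTop (nhds 0) := by
    have := ((hinv.const_mul (14*Real.log 3 + 28/3)).add (hlog.const_mul 14))
    simpa [hb, mul_comm] using this
  have key : ∀ n : ℕ, 1 ≤ n → ‖f n - c‖ ≤ b n := by
    intro n hn
    have hn0 : (0:ℝ) < n := by exact_mod_cast hn
    have hn1 : (1:ℝ) ≤ n := by exact_mod_cast hn
    have hnne : (n:ℝ) ≠ 0 := ne_of_gt hn0
    have hl3 : ℓh (3*n) = Real.log 3 + Real.log n := by
      rw [ℓh]
      push_cast
      rw [Real.log_mul (by norm_num) hnne]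
    have hl2 : ℓh (2*n) = Real.log 2 + Real.log n := by
      rw [ℓh]
      push_cast
      rw [Real.log_mul (by norm_num) hnne]
    have hln : ℓh n = Real.log n := rfl
    set e3 := Ah (3*n) - (((3*n:ℕ):ℝ)^2/2 * ℓh (3*n) - ((3*n:ℕ):ℝ)^2/4) with he3
    set e2 := Ah (2*n) - (((2*n:ℕ):ℝ)^2/2 * ℓh (2*n) - ((2*n:ℕ):ℝ)^2/4) with he2
    set e1 := Ah n - ((n:ℝ)^2/2 * ℓh n - (n:ℝ)^2/4) with he1
    have hA3 : Ah (3*n) = (3*(n:ℝ))^2/2 * (Real.log 3 + Real.log n) - (3*(n:ℝ))^2/4 + e3 := by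
      rw [he3, hl3]; push_cast; ring
    have hA2 : Ah (2*n) = (2*(n:ℝ))^2/2 * (Real.log 2 + Real.log n) - (2*(n:ℝ))^2/4 + e2 := by
      rw [he2, hl2]; push_cast; ring
    have hA1 : Ah n = (n:ℝ)^2/2 * Real.log n - (n:ℝ)^2/4 + e1 := by
      rw [he1, hln]; ring
    have hval : f n - c
        = (1 / (3 * (n:ℝ)^2)) * (e3 - 3*e2 + 3*e1 + (Ch (3*n) - 3*Ch (2*n) + 3*Ch n)) := by
      rw [hfdef]
      simp only
      rw [GF_split, GF_split, GF_split, hA3, hA2, hA1, hc]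
      push_cast
      field_simp
      ring
    have hb3 := eps_bound n (3*n) hn (by omega) (by omega)
    have hb2 := eps_bound n (2*n) hn (by omega) (by omega)
    have hb1 := eps_bound n n hn hn (by omega)
    have hc3 := Ch_bound' n (3*n) hn (by omega) (by omega)
    have hc2 := Ch_bound' n (2*n) hn (by omega) (by omega)
    have hc1 := Ch_bound' n n hn hn (by omega)
    rw [← he3] at hb3; rw [← he2] at hb2; rw [← he1] at hb1
    have herr : |e3 - 3*e2 + 3*e1 + (Ch (3*n) - 3*Ch (2*n) + 3*Ch n)|
        ≤ 42*(n:ℝ)*(Real.log 3 + Real.log n) + 28*n := by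
      have t3 := abs_le.mp hb3
      have t2 := abs_le.mp hb2
      have t1 := abs_le.mp hb1
      have s3 := abs_le.mp hc3
      have s2 := abs_le.mp hc2
      have s1 := abs_le.mp hc1
      have hlogn : 0 ≤ Real.log n := Real.log_nonneg hn1
      have hlog3 : (0:ℝ) ≤ Real.log 3 := Real.log_nonneg (by norm_num)
      rw [abs_le]
      constructor <;> [linarith; linarith]
    calc ‖f n - c‖ = (1 / (3 * (n:ℝ)^2)) *
          |e3 - 3*e2 + 3*e1 + (Ch (3*n) - 3*Ch (2*n) + 3*Ch n)| := by
          rw [Real.norm_eq_abs, hval, abs_mul, abs_of_pos (by positivity)]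
      _ ≤ (1 / (3 * (n:ℝ)^2)) * (42*(n:ℝ)*(Real.log 3 + Real.log n) + 28*n) :=
          mul_le_mul_of_nonneg_left herr (by positivity)
      _ = b n := by rw [hb]; field_simp; ring
  have h0 : Filter.Tendsto (fun n => f n - c) Filter.atTop (nhds 0) :=
    squeeze_zero_norm' ((Filter.eventually_ge_atTop 1).mono key) hb0
  have h1 := h0.add (tendsto_const_nhds (x := c))
  simpa using h1

/-- The entropy per tile of rhombus tilings of the regular-side hexagon:
`(3/2)·ln 3 - 2·ln 2 = lim_{n→∞} (1/(3n²))·ln PP(n,n,n)` where `PP(n,n,n)` is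
MacMahon's box product. -/
theorem hexagon_entropy :
    Filter.Tendsto (fun n : ℕ =>
        (1 / (3 * (n : ℝ) ^ 2)) * Real.log
          (∏ i ∈ Finset.Icc 1 n, ∏ j ∈ Finset.Icc 1 n, ∏ k ∈ Finset.Icc 1 n,
            ((i : ℝ) + (j : ℝ) + (k : ℝ) - 1) / ((i : ℝ) + (j : ℝ) + (k : ℝ) - 2)))
      Filter.atTop (nhds ((3 / 2) * Real.log 3 - 2 * Real.log 2)) := by
  exact main_tendsto.congr fun n => by rw [log_prod_eq n]
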